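/- arXiv:2310.17807 — 2 statements merged into one kernel-verified Lean document; each statement's English description precedes it below -/
import Mathlib

section
/- Acceptance bound for consistent inputs (Theorem 1, part 1). Let A and B be countable types, B equipped with an equivalence relation ≡, let G ⊆ A × B, let D be a probability mass function on A × B with D(G) > 0, let M : A → PMF(B) be a transfer model, and let f : A → e(B) assign to each x ∈ A an equivalence class of B. Let D_G denote D conditioned on the event {(x, y) : (x, y) ∈ G}. Define the single-edge acceptance probability on consistent inputs as Acc := E_{(x,y) ~ D_G}[ M(x)( { y' : y' ≡ y } ) ]. Suppose: (Consistency alignment) the probability under D_G that y ∈ f(x) is at least c₁; and (Concentration) for some 0 < l ≤ 1 and p_c ∈ [0, 1], the probability, under D conditioned on the event {(x, y) ∈ G and y ∈ f(x)}, that M(x)(f(x)) ≥ l is at least p_c. Then Acc ≥ l · p_c · c₁. -/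
open scoped Classical ENNReal

/-- Theorem 1, part 1: acceptance bound for consistent inputs.
The single-edge Clover consistency check accepts a consistent input `(x, y) ∈ G`,
drawn from `D` conditioned on `G`, with probability at least `l · p_c · c₁`. -/
theorem clover_accept_consistent
    {A B : Type*} [Countable A] [Countable B]
    (sb : Setoid B)
    (G : A → B → Prop)
    (D : PMF (A × B))
    (M : A → PMF B)
    (f : A → Quotient sb)
    (c₁ l pc : ℝ≥0∞)
    (hl0 : 0 < l) (hl1 : l ≤ 1) (hpc : pc ≤ 1)
    -- D(G) > 0
    (hDG : 0 < ∑' p : A × B, if G p.1 p.2 then D p else 0)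
    -- Consistency alignment: Pr_{D_G}[ y ∈ f(x) ] ≥ c₁
    (halign :
      c₁ ≤ (∑' p : A × B, if G p.1 p.2 ∧ Quotient.mk sb p.2 = f p.1 then D p else 0) /
        (∑' p : A × B, if G p.1 p.2 then D p else 0))
    -- Concentration: conditioned on (x,y) ∈ G and y ∈ f(x),
    -- with probability ≥ p_c the mass M(x)(f(x)) is at least l
    (hconc :
      pc ≤ (∑' p : A × B,
          if (G p.1 p.2 ∧ Quotient.mk sb p.2 = f p.1) ∧
              l ≤ ∑' y : {y : B // Quotient.mk sb y = f p.1}, M p.1 y.1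
          then D p else 0) /
        (∑' p : A × B, if G p.1 p.2 ∧ Quotient.mk sb p.2 = f p.1 then D p else 0)) :
    -- Acc = E_{(x,y) ~ D_G}[ M(x)({y' : y' ≡ y}) ] ≥ l · p_c · c₁
    l * pc * c₁ ≤
      (∑' p : A × B,
          if G p.1 p.2 then D p * ∑' y' : {y' : B // sb.r y' p.2}, M p.1 y'.1 else 0) /
        (∑' p : A × B, if G p.1 p.2 then D p else 0) := by
  classical
  set S := ∑' p : A × B, if G p.1 p.2 then D p else 0 with hS
  set S₁ := ∑' p : A × B, if G p.1 p.2 ∧ Quotient.mk sb p.2 = f p.1 then D p else 0 with hS₁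
  set S₂ := ∑' p : A × B,
      if (G p.1 p.2 ∧ Quotient.mk sb p.2 = f p.1) ∧
          l ≤ ∑' y : {y : B // Quotient.mk sb y = f p.1}, M p.1 y.1
      then D p else 0 with hS₂
  set T := ∑' p : A × B,
      if G p.1 p.2 then D p * ∑' y' : {y' : B // sb.r y' p.2}, M p.1 y'.1 else 0 with hT
  have hS₁le1 : S₁ ≤ 1 := by
    rw [hS₁, ← D.tsum_coe]
    exact ENNReal.tsum_le_tsum fun p => by split <;> simp
  have hS₂S₁ : S₂ ≤ S₁ := by
    rw [hS₂, hS₁]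
    refine ENNReal.tsum_le_tsum fun p => ?_
    split_ifs with h1 h2
    · rfl
    · exact absurd h1.1 h2
    · exact zero_le
    · rfl
  have hlS₂ : l * S₂ ≤ T := by
    rw [hS₂, hT, ← ENNReal.tsum_mul_left]
    refine ENNReal.tsum_le_tsum fun p => ?_
    by_cases h : (G p.1 p.2 ∧ Quotient.mk sb p.2 = f p.1) ∧
        l ≤ ∑' y : {y : B // Quotient.mk sb y = f p.1}, M p.1 y.1
    · rw [if_pos h, if_pos h.1.1, mul_comm l (D p)]
      refine mul_le_mul_right ?_ _
      have hiff : ∀ y : B, Quotient.mk sb y = f p.1 ↔ sb.r y p.2 := by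
        intro y
        rw [← h.1.2]
        exact ⟨fun hy => Quotient.exact hy, fun hy => Quotient.sound hy⟩
      have hequiv : (∑' y : {y : B // Quotient.mk sb y = f p.1}, M p.1 y.1)
          = ∑' y' : {y' : B // sb.r y' p.2}, M p.1 y'.1 :=
        Equiv.tsum_eq (Equiv.subtypeEquivRight hiff)
          (fun y : {y' : B // sb.r y' p.2} => (M p.1 y.1 : ℝ≥0∞))
      exact hequiv ▸ h.2
    · rw [if_neg h, mul_zero]; exact zero_le
  by_cases hS₁0 : S₁ = 0
  · have hS₂0 : S₂ = 0 := le_antisymm (hS₁0 ▸ hS₂S₁) (zero_le)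
    have hpc0 : pc = 0 := le_antisymm (by simpa [hS₁0, hS₂0] using hconc) (zero_le)
    simp [hpc0]
  · have hS₁top : S₁ ≠ ⊤ := (hS₁le1.trans_lt ENNReal.one_lt_top).ne
    calc l * pc * c₁ ≤ l * (S₂ / S₁) * (S₁ / S) := by gcongr
      _ = l * S₂ / S := by
          rw [mul_assoc, ← mul_div_assoc (S₂ / S₁), ENNReal.div_mul_cancel hS₁0 hS₁top,
            ← mul_div_assoc]
      _ ≤ T / S := ENNReal.div_le_div_right hlS₂ S
end

section
/- Acceptance bound for inconsistent inputs (Theorem 1, part 2). Let A and B be countable types, B equipped with an equivalence relation ≡, let G ⊆ A × B, let D be a probability mass function on A × B with D(complement of G) > 0, let M : A → PMF(B) be a transfer model, and let f : A → e(B) assign to each x ∈ A an equivalence class of B. Let D_{¬G} denote D conditioned on the event {(x, y) : (x, y) ∉ G}. Define the single-edge acceptance probability on inconsistent inputs as Acc := E_{(x,y) ~ D_{¬G}}[ M(x)( { y' : y' ≡ y } ) ]. Suppose: (Consistency alignment) the probability under D_{¬G} that y ∈ f(x) is at most c₀; and (Concentration) for some u ≥ 0 and p_c ∈ [0, 1],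 the probability, under D conditioned on the event {(x, y) ∉ G and y ∉ f(x)}, that every equivalence class C of B with C ≠ f(x) satisfies M(x)(C) ≤ u, is at least p_c. Then Acc ≤ u · p_c · (1 − c₀) + (1 − p_c) · (1 − c₀) + c₀. -/
open scoped Classical ENNReal

/-- Theorem 1, part 2: acceptance bound for inconsistent inputs.
The single-edge Clover consistency check accepts an inconsistent input `(x, y) ∉ G`,
drawn from `D` conditioned on the complement of `G`, with probability at most
`u · p_c · (1 − c₀) + (1 − p_c) · (1 − c₀) + c₀`. -/
theorem clover_accept_inconsistent
    {A B : Type*} [Countable A] [Countable B]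
    (sb : Setoid B)
    (G : A → B → Prop)
    (D : PMF (A × B))
    (M : A → PMF B)
    (f : A → Quotient sb)
    (c₀ u pc : ℝ≥0∞)
    (hu : 0 ≤ u) (hpc : pc ≤ 1)
    -- D(complement of G) > 0
    (hDnG : 0 < ∑' p : A × B, if ¬ G p.1 p.2 then D p else 0)
    -- Consistency alignment: Pr_{D_{¬G}}[ y ∈ f(x) ] ≤ c₀
    (halign :
      (∑' p : A × B, if ¬ G p.1 p.2 ∧ Quotient.mk sb p.2 = f p.1 then D p else 0) /
        (∑' p : A × B, if ¬ G p.1 p.2 then D p else 0) ≤ c₀)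
    -- Concentration: conditioned on (x,y) ∉ G and y ∉ f(x),
    -- with probability ≥ p_c every class C ≠ f(x) has mass M(x)(C) ≤ u
    (hconc :
      pc ≤ (∑' p : A × B,
          if (¬ G p.1 p.2 ∧ Quotient.mk sb p.2 ≠ f p.1) ∧
              (∀ C : Quotient sb, C ≠ f p.1 →
                (∑' y : {y : B // Quotient.mk sb y = C}, M p.1 y.1) ≤ u)
          then D p else 0) /
        (∑' p : A × B, if ¬ G p.1 p.2 ∧ Quotient.mk sb p.2 ≠ f p.1 then D p else 0)) :
    -- Acc = E_{(x,y) ~ D_{¬G}}[ M(x)({y' : y' ≡ y}) ]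
    --     ≤ u · p_c · (1 − c₀) + (1 − p_c) · (1 − c₀) + c₀
    (∑' p : A × B,
        if ¬ G p.1 p.2 then D p * ∑' y' : {y' : B // sb.r y' p.2}, M p.1 y'.1 else 0) /
      (∑' p : A × B, if ¬ G p.1 p.2 then D p else 0) ≤
      u * pc * (1 - c₀) + (1 - pc) * (1 - c₀) + c₀ := by
  classical
  -- abbreviations
  set cond : A × B → Prop := fun p =>
    (∀ C : Quotient sb, C ≠ f p.1 →
      (∑' y : {y : B // Quotient.mk sb y = C}, M p.1 y.1) ≤ u) with hcond
  set N : ℝ≥0∞ := ∑' p : A × B,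
      if ¬ G p.1 p.2 then D p * ∑' y' : {y' : B // sb.r y' p.2}, M p.1 y'.1 else 0 with hN
  set Z : ℝ≥0∞ := ∑' p : A × B, if ¬ G p.1 p.2 then D p else 0 with hZ
  set a1 : ℝ≥0∞ := ∑' p : A × B,
      if ¬ G p.1 p.2 ∧ Quotient.mk sb p.2 = f p.1 then D p else 0 with ha1
  set W : ℝ≥0∞ := ∑' p : A × B,
      if ¬ G p.1 p.2 ∧ Quotient.mk sb p.2 ≠ f p.1 then D p else 0 with hW
  set a2 : ℝ≥0∞ := ∑' p : A × B,
      if (¬ G p.1 p.2 ∧ Quotient.mk sb p.2 ≠ f p.1) ∧ cond p then D p else 0 with ha2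
  set a3 : ℝ≥0∞ := ∑' p : A × B,
      if (¬ G p.1 p.2 ∧ Quotient.mk sb p.2 ≠ f p.1) ∧ ¬ cond p then D p else 0 with ha3
  -- each class-mass sum over the relation equals the one over the quotient equality
  have hST : ∀ p : A × B,
      (∑' y' : {y' : B // sb.r y' p.2}, M p.1 y'.1)
        = ∑' y : {y : B // Quotient.mk sb y = Quotient.mk sb p.2}, M p.1 y.1 := by
    intro p
    let e : {y' : B // sb.r y' p.2} ≃ {y : B // Quotient.mk sb y = Quotient.mk sb p.2} :=
      ⟨fun a => ⟨a.1, Quotient.sound a.2⟩, fun b => ⟨b.1, Quotient.exact b.2⟩,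
        fun a => rfl, fun b => rfl⟩
    calc (∑' y' : {y' : B // sb.r y' p.2}, M p.1 y'.1)
        = ∑' y' : {y' : B // sb.r y' p.2}, M p.1 ((e y') : B) := tsum_congr (fun a => rfl)
      _ = _ := e.tsum_eq (fun y : {y : B // Quotient.mk sb y = Quotient.mk sb p.2} => M p.1 y.1)
  have hT1 : ∀ (x : A) (C : Quotient sb),
      (∑' y : {y : B // Quotient.mk sb y = C}, M x y.1) ≤ 1 := by
    intro x C
    calc (∑' y : {y : B // Quotient.mk sb y = C}, M x y.1)
        ≤ ∑' y : B, M x y :=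
          ENNReal.tsum_comp_le_tsum_of_injective Subtype.val_injective _
      _ = 1 := (M x).tsum_coe
  -- bound each sum by 1
  have hsum_le : ∀ g : A × B → ℝ≥0∞, (∀ p, g p ≤ D p) →
      (∑' p : A × B, g p) ≤ 1 := by
    intro g hg
    calc (∑' p : A × B, g p) ≤ ∑' p : A × B, D p := ENNReal.tsum_le_tsum hg
      _ = 1 := D.tsum_coe
  have hZ1 : Z ≤ 1 := by rw [hZ]; exact hsum_le _ (fun p => by split <;> simp)
  have ha11 : a1 ≤ 1 := by rw [ha1]; exact hsum_le _ (fun p => by split <;> simp)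
  have hW1 : W ≤ 1 := by rw [hW]; exact hsum_le _ (fun p => by split <;> simp)
  have ha21 : a2 ≤ 1 := by rw [ha2]; exact hsum_le _ (fun p => by split <;> simp)
  have ha31 : a3 ≤ 1 := by rw [ha3]; exact hsum_le _ (fun p => by split <;> simp)
  have hN1 : N ≤ 1 := by
    rw [hN]
    calc _ ≤ ∑' p : A × B, D p := by
          apply ENNReal.tsum_le_tsum; intro p
          split
          · calc D p * _ ≤ D p * 1 := by
                  gcongr
                  rw [hST]; exact hT1 _ _
              _ = D p := mul_one _
          · simp
      _ = 1 := D.tsum_coe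
  have hZ0 : Z ≠ 0 := hDnG.ne'
  have hZtop : Z ≠ ∞ := (hZ1.trans_lt ENNReal.one_lt_top).ne
  -- splitting identities
  have hsplitZ : a1 + W = Z := by
    rw [ha1, hW, hZ, ← ENNReal.tsum_add]
    apply tsum_congr; intro p
    by_cases hg : ¬ G p.1 p.2
    · by_cases he : Quotient.mk sb p.2 = f p.1
      · rw [if_pos (And.intro hg he), if_neg (fun h => h.2 he), if_pos hg, add_zero]
      · rw [if_neg (fun h => he h.2), if_pos (And.intro hg he), if_pos hg, zero_add]
    · rw [if_neg (fun h => hg h.1), if_neg (fun h => hg h.1), if_neg hg, add_zero]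
  have hsplitW : a2 + a3 = W := by
    rw [ha2, ha3, hW, ← ENNReal.tsum_add]
    apply tsum_congr; intro p
    by_cases hg : ¬ G p.1 p.2 ∧ Quotient.mk sb p.2 ≠ f p.1
    · by_cases hc : cond p
      · rw [if_pos (And.intro hg hc), if_neg (fun h => h.2 hc), if_pos hg, add_zero]
      · rw [if_neg (fun h => hc h.2), if_pos (And.intro hg hc), if_pos hg, zero_add]
    · rw [if_neg (fun h => hg h.1), if_neg (fun h => hg h.1), if_neg hg, add_zero]
  -- main pointwise bound
  have hNbound : N ≤ a1 + u * a2 + a3 := by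
    rw [hN, ha1, ha2, ha3, ← ENNReal.tsum_mul_left, ← ENNReal.tsum_add, ← ENNReal.tsum_add]
    apply ENNReal.tsum_le_tsum; intro p
    by_cases hg : ¬ G p.1 p.2
    · by_cases he : Quotient.mk sb p.2 = f p.1
      · have : ¬ ((¬ G p.1 p.2 ∧ Quotient.mk sb p.2 ≠ f p.1)) := by tauto
        simp only [if_pos hg, if_pos (And.intro hg he), if_neg (by tauto :
          ¬ ((¬ G p.1 p.2 ∧ Quotient.mk sb p.2 ≠ f p.1) ∧ cond p)), if_neg (by tauto :
          ¬ ((¬ G p.1 p.2 ∧ Quotient.mk sb p.2 ≠ f p.1) ∧ ¬ cond p)), mul_zero, add_zero]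
        calc D p * _ ≤ D p * 1 := by gcongr; rw [hST]; exact hT1 _ _
          _ = D p := mul_one _
      · by_cases hc : cond p
        · simp only [if_pos hg, if_neg (by tauto : ¬ (¬ G p.1 p.2 ∧ Quotient.mk sb p.2 = f p.1)),
            if_pos (And.intro (And.intro hg he) hc), if_neg (by tauto :
            ¬ ((¬ G p.1 p.2 ∧ Quotient.mk sb p.2 ≠ f p.1) ∧ ¬ cond p)), zero_add, add_zero]
          calc D p * _ ≤ D p * u := by
                gcongr; rw [hST]; exact hc (Quotient.mk sb p.2) he
            _ = u * D p := mul_comm _ _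
        · simp only [if_pos hg, if_neg (by tauto : ¬ (¬ G p.1 p.2 ∧ Quotient.mk sb p.2 = f p.1)),
            if_neg (by tauto : ¬ ((¬ G p.1 p.2 ∧ Quotient.mk sb p.2 ≠ f p.1) ∧ cond p)),
            if_pos (And.intro (And.intro hg he) hc), mul_zero, zero_add, zero_add]
          calc D p * _ ≤ D p * 1 := by gcongr; rw [hST]; exact hT1 _ _
            _ = D p := mul_one _
    · simp [hg]
  -- alignment: a1 ≤ c₀ * Z
  have halign' : a1 ≤ c₀ * Z := by
    have := mul_le_mul_left halign Z
    rwa [ENNReal.div_mul_cancel hZ0 hZtop] at this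
  -- concentration: pc * W ≤ a2
  have hconc' : pc * W ≤ a2 := by
    by_cases hW0 : W = 0
    · rw [hW0, mul_zero]; exact zero_le
    · have hWtop : W ≠ ∞ := (hW1.trans_lt ENNReal.one_lt_top).ne
      have := mul_le_mul_left hconc W
      rwa [ENNReal.div_mul_cancel hW0 hWtop] at this
  -- reduce to N ≤ RHS * Z
  rw [ENNReal.div_le_iff_le_mul (Or.inl hZ0) (Or.inl hZtop)]
  by_cases hbig : 1 ≤ u ∨ 1 ≤ c₀
  · -- trivial case: RHS ≥ 1
    have hR1 : (1 : ℝ≥0∞) ≤ u * pc * (1 - c₀) + (1 - pc) * (1 - c₀) + c₀ := by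
      rcases hbig with h | h
      · calc (1 : ℝ≥0∞) ≤ (1 - c₀) + c₀ := le_tsub_add
          _ = (pc + (1 - pc)) * (1 - c₀) + c₀ := by
              rw [add_tsub_cancel_of_le hpc, one_mul]
          _ = pc * (1 - c₀) + (1 - pc) * (1 - c₀) + c₀ := by ring
          _ ≤ u * pc * (1 - c₀) + (1 - pc) * (1 - c₀) + c₀ :=
              add_le_add_left (add_le_add_left
                (mul_le_mul_left (le_mul_of_one_le_left' h) _) _) _
      · calc (1 : ℝ≥0∞) ≤ c₀ := h
          _ ≤ _ := le_add_self
    have hNZ : N ≤ Z := by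
      rw [hN, hZ]
      apply ENNReal.tsum_le_tsum; intro p
      split
      · calc D p * _ ≤ D p * 1 := by gcongr; rw [hST]; exact hT1 _ _
          _ = D p := mul_one _
      · simp
    calc N ≤ Z := hNZ
      _ = 1 * Z := (one_mul Z).symm
      _ ≤ _ := by gcongr
  · push_neg at hbig
    obtain ⟨hu1, hc1⟩ := hbig
    -- everything finite; pass to the reals
    have hutop : u ≠ ∞ := hu1.le.trans_lt ENNReal.one_lt_top |>.ne
    have hctop : c₀ ≠ ∞ := hc1.le.trans_lt ENNReal.one_lt_top |>.ne
    have hptop : pc ≠ ∞ := hpc.trans_lt ENNReal.one_lt_top |>.ne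
    have ha1top : a1 ≠ ∞ := (ha11.trans_lt ENNReal.one_lt_top).ne
    have ha2top : a2 ≠ ∞ := (ha21.trans_lt ENNReal.one_lt_top).ne
    have ha3top : a3 ≠ ∞ := (ha31.trans_lt ENNReal.one_lt_top).ne
    have hWtop : W ≠ ∞ := (hW1.trans_lt ENNReal.one_lt_top).ne
    have hNtop : N ≠ ∞ := (hN1.trans_lt ENNReal.one_lt_top).ne
    set nu := u.toReal
    set nc := c₀.toReal
    set np := pc.toReal
    set na1 := a1.toReal
    set na2 := a2.toReal
    set na3 := a3.toReal
    set nW := W.toReal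
    set nZ := Z.toReal
    set nN := N.toReal
    have h1c : (1 - c₀).toReal = 1 - nc := by
      rw [ENNReal.toReal_sub_of_le hc1.le ENNReal.one_ne_top, ENNReal.toReal_one]
    have h1p : (1 - pc).toReal = 1 - np := by
      rw [ENNReal.toReal_sub_of_le hpc ENNReal.one_ne_top, ENNReal.toReal_one]
    have hRtop : (u * pc * (1 - c₀) + (1 - pc) * (1 - c₀) + c₀) * Z ≠ ∞ := by
      apply ENNReal.mul_ne_top _ hZtop
      apply ENNReal.add_ne_top.2 ⟨ENNReal.add_ne_top.2 ⟨?_, ?_⟩, hctop⟩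
      · exact ENNReal.mul_ne_top (ENNReal.mul_ne_top hutop hptop)
          (ENNReal.sub_ne_top ENNReal.one_ne_top)
      · exact ENNReal.mul_ne_top (ENNReal.sub_ne_top ENNReal.one_ne_top)
          (ENNReal.sub_ne_top ENNReal.one_ne_top)
    rw [← ENNReal.toReal_le_toReal hNtop hRtop]
    have hrhs : ((u * pc * (1 - c₀) + (1 - pc) * (1 - c₀) + c₀) * Z).toReal
        = (nu * np * (1 - nc) + (1 - np) * (1 - nc) + nc) * nZ := by
      rw [ENNReal.toReal_mul, ENNReal.toReal_add, ENNReal.toReal_add,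
        ENNReal.toReal_mul, ENNReal.toReal_mul, ENNReal.toReal_mul, h1c, h1p]
      · exact ENNReal.mul_ne_top (ENNReal.mul_ne_top hutop hptop)
          (ENNReal.sub_ne_top ENNReal.one_ne_top)
      · exact ENNReal.mul_ne_top (ENNReal.sub_ne_top ENNReal.one_ne_top)
          (ENNReal.sub_ne_top ENNReal.one_ne_top)
      · apply ENNReal.add_ne_top.2
        constructor
        · exact ENNReal.mul_ne_top (ENNReal.mul_ne_top hutop hptop)
            (ENNReal.sub_ne_top ENNReal.one_ne_top)
        · exact ENNReal.mul_ne_top (ENNReal.sub_ne_top ENNReal.one_ne_top)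
            (ENNReal.sub_ne_top ENNReal.one_ne_top)
      · exact hctop
    rw [hrhs]
    -- real versions of the facts
    have rsplitZ : na1 + nW = nZ := by
      rw [← ENNReal.toReal_add ha1top hWtop, hsplitZ]
    have rsplitW : na2 + na3 = nW := by
      rw [← ENNReal.toReal_add ha2top ha3top, hsplitW]
    have rN : nN ≤ na1 + nu * na2 + na3 := by
      calc nN ≤ (a1 + u * a2 + a3).toReal := by
            apply ENNReal.toReal_le_toReal hNtop _ |>.2 hNbound
            exact ENNReal.add_ne_top.2
              ⟨ENNReal.add_ne_top.2 ⟨ha1top, ENNReal.mul_ne_top hutop ha2top⟩, ha3top⟩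
        _ = na1 + nu * na2 + na3 := by
            rw [ENNReal.toReal_add, ENNReal.toReal_add ha1top
              (ENNReal.mul_ne_top hutop ha2top), ENNReal.toReal_mul]
            · exact ENNReal.add_ne_top.2 ⟨ha1top, ENNReal.mul_ne_top hutop ha2top⟩
            · exact ha3top
    have ralign : na1 ≤ nc * nZ := by
      calc na1 ≤ (c₀ * Z).toReal :=
            ENNReal.toReal_le_toReal ha1top (ENNReal.mul_ne_top hctop hZtop) |>.2 halign'
        _ = nc * nZ := ENNReal.toReal_mul
    have rconc : np * nW ≤ na2 := by
      calc np * nW = (pc * W).toReal := ENNReal.toReal_mul.symm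
        _ ≤ na2 := ENNReal.toReal_le_toReal (ENNReal.mul_ne_top hptop hWtop) ha2top |>.2 hconc'
    have hW' : nW = nZ - na1 := by linarith
    have ha3' : na3 = nW - na2 := by linarith
    rw [hW'] at rconc
    have hnu1 : nu ≤ 1 := by
      rw [← ENNReal.toReal_one]; exact ENNReal.toReal_mono ENNReal.one_ne_top hu1.le
    have hnp0 : 0 ≤ np := ENNReal.toReal_nonneg
    have hna2 : 0 ≤ na2 := ENNReal.toReal_nonneg
    have hna1 : 0 ≤ na1 := ENNReal.toReal_nonneg
    have hna3 : 0 ≤ na3 := ENNReal.toReal_nonneg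
    have hnW : 0 ≤ nW := ENNReal.toReal_nonneg
    have hnZ : 0 ≤ nZ := ENNReal.toReal_nonneg
    have hgoal : N.toReal = nN := rfl
    rw [hgoal]
    nlinarith [mul_le_mul_of_nonneg_left ralign (mul_nonneg (sub_nonneg.2 hnu1) hnp0),
      mul_le_mul_of_nonneg_left rconc (sub_nonneg.2 hnu1), rN, ha3', hW']
end
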